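/- If X is normally distributed with mean μ and variance σ² (σ > 0), then for any positive integer n and K > 0, E[(e^{nX} − K)⁺] = e^{nμ + n²σ²/2} Φ(f₂ + nσ) − K Φ(f₂), where f₂ = (μ − (1/n) ln K)/σ. -/

import Mathlib

open MeasureTheory ProbabilityTheory Real

noncomputable def stdNormalCDF (x : ℝ) : ℝ :=
  ((gaussianReal 0 1) (Set.Iic x)).toReal

-- N(0,1) symmetry
lemma gauss01_Ici (a : ℝ) : gaussianReal 0 1 (Set.Ici a) = gaussianReal 0 1 (Set.Iic (-a)) := by
  have h := gaussianReal_map_const_mul (μ := 0) (v := 1) (-1)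
  have h1 : NNReal.mk ((-1:ℝ)^2) (sq_nonneg _) * 1 = 1 := by
    ext; norm_num
  rw [h1] at h
  simp only [mul_zero] at h
  have hm : Measurable fun x : ℝ => (-1 : ℝ) * x := by fun_prop
  calc gaussianReal 0 1 (Set.Ici a)
      = gaussianReal 0 1 ((fun x : ℝ => (-1:ℝ) * x) ⁻¹' Set.Iic (-a)) := by
        congr 1
        ext x
        simp
    _ = Measure.map (fun x : ℝ => (-1:ℝ) * x) (gaussianReal 0 1) (Set.Iic (-a)) := by
        rw [Measure.map_apply hm measurableSet_Iic]
    _ = gaussianReal 0 1 (Set.Iic (-a)) := by rw [h]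

lemma gauss_Ici_toReal {σ : ℝ} (hσ : 0 < σ) (m c : ℝ) :
    ((gaussianReal m (Real.toNNReal (σ ^ 2))) (Set.Ici c)).toReal
      = stdNormalCDF ((m - c) / σ) := by
  have h1 : NNReal.mk (σ^2) (sq_nonneg _) * 1 = Real.toNNReal (σ ^ 2) := by
    ext; simp [Real.toNNReal, sq_nonneg σ, max_eq_left (sq_nonneg σ)]
  have hmap : gaussianReal m (Real.toNNReal (σ ^ 2))
      = Measure.map (· + m) (Measure.map (σ * ·) (gaussianReal 0 1)) := by
    rw [gaussianReal_map_const_mul, h1, gaussianReal_map_add_const]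
    simp
  have hm1 : Measurable fun x : ℝ => x + m := by fun_prop
  have hm2 : Measurable fun x : ℝ => σ * x := by fun_prop
  rw [hmap, Measure.map_apply hm1 measurableSet_Ici]
  have hp1 : (fun x : ℝ => x + m) ⁻¹' Set.Ici c = Set.Ici (c - m) := by
    ext x; simp [le_sub_iff_add_le]
  rw [hp1, Measure.map_apply hm2 measurableSet_Ici]
  have hp2 : (fun x : ℝ => σ * x) ⁻¹' Set.Ici (c - m) = Set.Ici ((c - m) / σ) := by
    ext x; simp [Set.mem_Ici, div_le_iff₀ hσ, mul_comm, le_div_iff₀ hσ]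
  rw [hp2, gauss01_Ici, stdNormalCDF]
  congr 2

  rw [← neg_div, neg_sub]

lemma setPdf_Ici {σ : ℝ} (hσ : 0 < σ) (m c : ℝ) :
    ∫ x in Set.Ici c, gaussianPDFReal m (Real.toNNReal (σ ^ 2)) x
      = stdNormalCDF ((m - c) / σ) := by
  have hv : Real.toNNReal (σ ^ 2) ≠ 0 := by
    simp [Real.toNNReal_eq_zero, not_le, pow_pos hσ, hσ.ne']
  have h := gaussianReal_apply_eq_integral m hv (Set.Ici c)
  have hnn : 0 ≤ ∫ x in Set.Ici c, gaussianPDFReal m (Real.toNNReal (σ ^ 2)) x :=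
    setIntegral_nonneg measurableSet_Ici fun x _ => gaussianPDFReal_nonneg _ _ _
  rw [← gauss_Ici_toReal hσ m c, h, ENNReal.toReal_ofReal hnn]

lemma tilt_eq {σ : ℝ} (hσ : 0 < σ) (m a x : ℝ) :
    rexp (a * x) * gaussianPDFReal m (Real.toNNReal (σ ^ 2)) x
      = rexp (a * m + a ^ 2 * σ ^ 2 / 2)
          * gaussianPDFReal (m + a * σ ^ 2) (Real.toNNReal (σ ^ 2)) x := by
  have hc : ((Real.toNNReal (σ ^ 2) : NNReal) : ℝ) = σ ^ 2 :=
    Real.coe_toNNReal _ (sq_nonneg σ)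
  rw [gaussianPDFReal, gaussianPDFReal, hc]
  rw [mul_left_comm, ← Real.exp_add, mul_left_comm, ← Real.exp_add]
  congr 2
  have hσ2 : σ ^ 2 ≠ 0 := by positivity
  field_simp
  ring

theorem geom_asian_power_key_lemma
    {Ω : Type*} [MeasurableSpace Ω] (P : Measure Ω) [IsProbabilityMeasure P]
    (X : Ω → ℝ) (μ σ K : ℝ) (n : ℕ) (hn : 1 ≤ n) (hσ : 0 < σ) (hK : 0 < K)
    (hX : Measure.map X P = gaussianReal μ (Real.toNNReal (σ ^ 2))) :
    ∫ ω, max (Real.exp ((n : ℝ) * X ω) - K) 0 ∂P =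
      Real.exp ((n : ℝ) * μ + (n : ℝ) ^ 2 * σ ^ 2 / 2)
          * stdNormalCDF ((μ - (1 / (n : ℝ)) * Real.log K) / σ + (n : ℝ) * σ)
        - K * stdNormalCDF ((μ - (1 / (n : ℝ)) * Real.log K) / σ) := by
  have hn0 : (0 : ℝ) < n := by exact_mod_cast hn
  set c : ℝ := Real.log K / n with hc
  set v : NNReal := Real.toNNReal (σ ^ 2) with hv0
  have hv : v ≠ 0 := by
    simp [hv0, Real.toNNReal_eq_zero, not_le, pow_pos hσ, hσ.ne']
  have hXm : AEMeasurable X P :=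
    aemeasurable_of_map_neZero (by rw [hX]; infer_instance)
  have hcont : Continuous fun x : ℝ => max (Real.exp ((n : ℝ) * x) - K) 0 := by fun_prop
  -- transfer to the gaussian measure
  have h1 : ∫ ω, max (Real.exp ((n : ℝ) * X ω) - K) 0 ∂P
      = ∫ x, max (Real.exp ((n : ℝ) * x) - K) 0 ∂(gaussianReal μ v) := by
    rw [← hX, integral_map hXm hcont.aestronglyMeasurable]
  -- density
  have h2 : ∫ x, max (Real.exp ((n : ℝ) * x) - K) 0 ∂(gaussianReal μ v)
      = ∫ x, max (Real.exp ((n : ℝ) * x) - K) 0 * gaussianPDFReal μ v x := by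
    rw [gaussianReal_of_var_ne_zero _ hv]
    have hmeas : Measurable fun x => (gaussianPDFReal μ v x).toNNReal := by
      apply Measurable.real_toNNReal
      unfold gaussianPDFReal
      fun_prop
    rw [show gaussianPDF μ v = fun x => ((gaussianPDFReal μ v x).toNNReal : ENNReal) from rfl,
      integral_withDensity_eq_integral_smul hmeas]
    congr 1
    ext x
    rw [NNReal.smul_def, smul_eq_mul, Real.coe_toNNReal _ (gaussianPDFReal_nonneg _ _ _),
      mul_comm]
  -- indicator
  have hKexp : ∀ x : ℝ, c ≤ x → K ≤ Real.exp ((n : ℝ) * x) := by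
    intro x hx
    have : Real.log K ≤ (n : ℝ) * x := by
      rw [hc, div_le_iff₀ hn0] at hx
      linarith [hx]
    calc K = Real.exp (Real.log K) := (Real.exp_log hK).symm
      _ ≤ _ := Real.exp_le_exp.mpr this
  have h3 : (fun x => max (Real.exp ((n : ℝ) * x) - K) 0 * gaussianPDFReal μ v x)
      = (Set.Ici c).indicator
          (fun x => (Real.exp ((n : ℝ) * x) - K) * gaussianPDFReal μ v x) := by
    funext x
    by_cases hx : c ≤ x
    · rw [Set.indicator_of_mem (Set.mem_Ici.mpr hx), max_eq_left (by linarith [hKexp x hx])]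
    · rw [Set.indicator_of_notMem (by simpa using hx), max_eq_right, zero_mul]
      push_neg at hx
      have : Real.exp ((n : ℝ) * x) < K := by
        have hlt : (n : ℝ) * x < Real.log K := by
          rw [hc] at hx
          have := (lt_div_iff₀ hn0).mp hx
          linarith
        calc Real.exp ((n : ℝ) * x) < Real.exp (Real.log K) := Real.exp_lt_exp.mpr hlt
          _ = K := Real.exp_log hK
      linarith
  -- integrabilities
  have hA := (n : ℝ) * μ + (n : ℝ) ^ 2 * σ ^ 2 / 2
  have htilt : ∀ x, Real.exp ((n : ℝ) * x) * gaussianPDFReal μ v x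
      = Real.exp ((n : ℝ) * μ + (n : ℝ) ^ 2 * σ ^ 2 / 2)
        * gaussianPDFReal (μ + (n : ℝ) * σ ^ 2) v x := fun x => tilt_eq hσ μ (n : ℝ) x
  have hI1 : Integrable (fun x => Real.exp ((n : ℝ) * x) * gaussianPDFReal μ v x) := by
    refine (((integrable_gaussianPDFReal (μ + (n : ℝ) * σ ^ 2) v).const_mul
      (Real.exp ((n : ℝ) * μ + (n : ℝ) ^ 2 * σ ^ 2 / 2))).congr ?_)
    exact ae_of_all _ fun x => (htilt x).symm
  have hI2 : Integrable (fun x => K * gaussianPDFReal μ v x) :=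
    (integrable_gaussianPDFReal μ v).const_mul K
  rw [h1, h2, h3, integral_indicator measurableSet_Ici]
  have h4 : ∫ x in Set.Ici c, (Real.exp ((n : ℝ) * x) - K) * gaussianPDFReal μ v x
      = (∫ x in Set.Ici c, Real.exp ((n : ℝ) * x) * gaussianPDFReal μ v x)
        - ∫ x in Set.Ici c, K * gaussianPDFReal μ v x := by
    rw [← integral_sub hI1.restrict hI2.restrict]
    congr 1
    funext x
    ring
  rw [h4]
  have h5 : ∫ x in Set.Ici c, Real.exp ((n : ℝ) * x) * gaussianPDFReal μ v x
      = Real.exp ((n : ℝ) * μ + (n : ℝ) ^ 2 * σ ^ 2 / 2)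
        * ∫ x in Set.Ici c, gaussianPDFReal (μ + (n : ℝ) * σ ^ 2) v x := by
    rw [← integral_const_mul]
    exact setIntegral_congr_fun measurableSet_Ici fun x _ => htilt x
  rw [h5, integral_const_mul, setPdf_Ici hσ, setPdf_Ici hσ]
  have e1 : (μ + (n : ℝ) * σ ^ 2 - c) / σ = (μ - (1 / (n : ℝ)) * Real.log K) / σ + (n : ℝ) * σ := by
    rw [hc]
    field_simp
    ring
  have e2 : (μ - c) / σ = (μ - (1 / (n : ℝ)) * Real.log K) / σ := by
    rw [hc]; congr 1; ring
  rw [e1, e2]
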